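/- Let T be a tournament, S ⊆ V(T), and x ∈ S a vertex lying on no directed triangle of T. Then x lies on no directed cycle of T, and a set F ⊆ V(T) hits all directed cycles of T meeting S if and only if F ∩ R hits all directed cycles of T[R] meeting S ∩ R and F ∩ R̄ hits all directed cycles of T[R̄] meeting S ∩ R̄, where R = R_T(x) is the set of vertices other than x reachable from x and R̄ = V(T) \ (R ∪ {x}). -/

import Mathlib

variable {V : Type*}

def IsDicycle (A : V → V → Prop) : List V → Prop
  | [] => False
  | v :: l => (v :: l).Nodup ∧ List.Chain A v (l ++ [v])

def IsTournament (A : V → V → Prop) : Prop :=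
  (∀ v, ¬ A v v) ∧ ∀ u v : V, u ≠ v → (A u v ↔ ¬ A v u)

def IndepNumLE (A : V → V → Prop) (α : ℕ) : Prop :=
  ∀ I : Finset V, (∀ u ∈ I, ∀ v ∈ I, u ≠ v → ¬ A u v) → I.card ≤ α

noncomputable def outDeg (A : V → V → Prop) (v : V) : ℕ := {u | A v u}.ncard

noncomputable def inDeg (A : V → V → Prop) (v : V) : ℕ := {u | A u v}.ncard

def restrictRel (A : V → V → Prop) (S : Set V) : V → V → Prop :=
  fun u v => u ∈ S ∧ v ∈ S ∧ A u v

def cycleArcs : List V → List (V × V)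
  | [] => []
  | v :: l => List.zip (v :: l) (l ++ [v])

def IsInducedDicycle (A : V → V → Prop) (l : List V) : Prop :=
  IsDicycle A l ∧ ∀ u ∈ l, ∀ v ∈ l, A u v → (u, v) ∈ cycleArcs l

def IsFVS (A : V → V → Prop) (F : Set V) : Prop :=
  ∀ l, IsDicycle A l → ∃ v ∈ l, v ∈ F

def reachSet (A : V → V → Prop) (x : V) : Set V :=
  {y | y ≠ x ∧ Relation.TransGen A x y}

def HitsCyclesThrough (A : V → V → Prop) (S F : Set V) : Prop :=
  ∀ l, IsDicycle A l → (∃ v ∈ l, v ∈ S) → ∃ v ∈ l, v ∈ F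


section Helpers

variable {A : V → V → Prop}

lemma chain_transGen : ∀ (l : List V) (a b : V),
    List.Chain A a l → b ∈ l → Relation.TransGen A a b := by
  intro l
  induction l with
  | nil => simp
  | cons c l ih =>
    intro a b hc hb
    rw [List.Chain, List.chain_cons] at hc
    rcases List.mem_cons.1 hb with rfl | hb
    · exact Relation.TransGen.single hc.1
    · exact (Relation.TransGen.single hc.1).trans (ih c b hc.2 hb)

lemma chain_rtg : ∀ (l : List V) (a b y : V),
    List.Chain A a (l ++ [b]) → y ∈ a :: l → Relation.ReflTransGen A y b := by
  intro l
  induction l with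
  | nil =>
    intro a b y hc hy
    simp only [List.mem_singleton, List.mem_cons, List.not_mem_nil, or_false] at hy
    subst hy
    simp only [List.nil_append, List.chain_cons, List.Chain.nil, and_true] at hc
    exact Relation.ReflTransGen.single (List.isChain_pair.1 hc)
  | cons c l ih =>
    intro a b y hc hy
    rw [List.cons_append, List.Chain, List.chain_cons] at hc
    rcases List.mem_cons.1 hy with rfl | hy
    · exact Relation.ReflTransGen.head hc.1 (ih c b c hc.2 (List.mem_cons_self))
    · exact ih c b y hc.2 hy

lemma cycle_transGen {l : List V} (hl : IsDicycle A l) {u w : V}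
    (hu : u ∈ l) (hw : w ∈ l) : Relation.TransGen A u w := by
  match l with
  | [] => exact absurd hl not_false
  | v :: l' =>
    obtain ⟨-, hchain⟩ := hl
    have h1 : Relation.ReflTransGen A u v := chain_rtg l' v v u hchain hu
    have h2 : w ∈ l' ++ [v] := by
      rcases List.mem_cons.1 hw with rfl | hw
      · simp
      · exact List.mem_append_left _ hw
    exact Relation.TransGen.trans_right h1 (chain_transGen _ v w hchain h2)

lemma dicycle_mono {B : V → V → Prop} (h : ∀ a b, A a b → B a b) :
    ∀ {l : List V}, IsDicycle A l → IsDicycle B l := by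
  intro l hl
  match l with
  | [] => exact absurd hl not_false
  | v :: l' => exact ⟨hl.1, List.IsChain.imp (fun a b => h a b) hl.2⟩

lemma mem_of_restricted_dicycle {W : Set V} {l : List V}
    (hl : IsDicycle (restrictRel A W) l) : ∀ u ∈ l, u ∈ W := by
  intro u hu
  have h := cycle_transGen hl hu hu
  cases h with
  | single h => exact h.1
  | tail _ h => exact h.2.1

lemma chain_restrict {W : Set V} : ∀ (m : List V) (a : V),
    List.Chain A a m → a ∈ W → (∀ u ∈ m, u ∈ W) →
    List.Chain (restrictRel A W) a m := by
  intro m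
  induction m with
  | nil => intro a _ _ _; exact List.Chain.nil
  | cons c m ih =>
    intro a hc ha hmem
    rw [List.Chain, List.chain_cons] at hc ⊢
    have hcW : c ∈ W := hmem c (List.mem_cons_self)
    exact ⟨⟨ha, hcW, hc.1⟩, ih c hc.2 hcW fun u hu => hmem u (List.mem_cons_of_mem _ hu)⟩

lemma dicycle_restrict {W : Set V} {l : List V} (hl : IsDicycle A l)
    (hmem : ∀ u ∈ l, u ∈ W) : IsDicycle (restrictRel A W) l := by
  match l with
  | [] => exact absurd hl not_false
  | v :: l' =>
    refine ⟨hl.1, chain_restrict _ _ hl.2 (hmem v (List.mem_cons_self)) ?_⟩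
    intro u hu
    rcases List.mem_append.1 hu with hu | hu
    · exact hmem u (List.mem_cons_of_mem _ hu)
    · rw [List.mem_singleton] at hu
      subst hu
      exact hmem u (List.mem_cons_self)

end Helpers

/-- In a tournament, if x ∈ S lies on no directed triangle, then x lies on no
directed cycle, and hitting all cycles meeting S decomposes into the two
subproblems on R and its complement. -/
theorem stmt11 (A : V → V → Prop) (hT : IsTournament A) (S : Set V) (x : V)
    (hxS : x ∈ S)
    (hx : ∀ l : List V, IsDicycle A l → l.length = 3 → x ∉ l) (F : Set V) :
    (∀ l : List V, IsDicycle A l → x ∉ l) ∧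
    (HitsCyclesThrough A S F ↔
      HitsCyclesThrough (restrictRel A (reachSet A x))
        (S ∩ reachSet A x) (F ∩ reachSet A x) ∧
      HitsCyclesThrough (restrictRel A (reachSet A x ∪ {x})ᶜ)
        (S ∩ (reachSet A x ∪ {x})ᶜ) (F ∩ (reachSet A x ∪ {x})ᶜ)) := by
  obtain ⟨hirr, hasym⟩ := hT
  -- closure of the out-neighbourhood of x
  have L1 : ∀ y z, A x y → A y z → z ≠ x → A x z := by
    intro y z hxy hyz hzx
    by_contra hxz
    have hzx' : A z x := (hasym z x hzx).2 hxz
    have hxney : x ≠ y := by rintro rfl; exact hirr x hxy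
    have hynez : y ≠ z := by rintro rfl; exact hirr y hyz
    have hxnez : x ≠ z := Ne.symm hzx
    refine hx [x, y, z] ⟨?_, ?_⟩ rfl (by simp)
    · simp [hxney, hynez, hxnez]
    · simp [List.Chain, List.chain_cons, hxy, hyz, hzx']
  have hreach : ∀ y, Relation.TransGen A x y → y ≠ x → A x y := by
    intro y hy
    induction hy with
    | single h => intro _; exact h
    | @tail b c hb hbc ih =>
      intro hcx
      by_cases hbx : b = x
      · rw [hbx] at hbc; exact hbc
      · exact L1 b c (ih hbx) hbc hcx
  have hnocyc : ∀ l, IsDicycle A l → x ∉ l := by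
    intro l hl hxl
    have hxx : Relation.TransGen A x x := cycle_transGen hl hxl hxl
    cases hxx with
    | single h => exact hirr x h
    | tail hxb hbx =>
      rename_i b
      have hbne : b ≠ x := by rintro rfl; exact hirr b hbx
      have : A x b := hreach b hxb hbne
      exact (hasym b x hbne).1 hbx this
  refine ⟨hnocyc, ?_, ?_⟩
  · -- forward direction
    intro hF
    constructor <;>
    · intro l hl hS
      obtain ⟨v0, hv0l, hv0S, hv0W⟩ := hS
      obtain ⟨v, hvl, hvF⟩ := hF l (dicycle_mono (fun a b h => h.2.2) hl) ⟨v0, hv0l, hv0S⟩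
      exact ⟨v, hvl, hvF, mem_of_restricted_dicycle hl v hvl⟩
  · -- backward direction
    rintro ⟨h1, h2⟩ l hl hS
    have hxnl := hnocyc l hl
    obtain ⟨v0, hv0l, hv0S⟩ := hS
    by_cases hR : ∃ u ∈ l, u ∈ reachSet A x
    · obtain ⟨u, hul, huR⟩ := hR
      have hall : ∀ w ∈ l, w ∈ reachSet A x := by
        intro w hwl
        have htg : Relation.TransGen A u w := cycle_transGen hl hul hwl
        exact ⟨fun e => hxnl (e ▸ hwl), huR.2.trans htg⟩
      obtain ⟨v, hvl, hvF, -⟩ :=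
        h1 l (dicycle_restrict hl hall) ⟨v0, hv0l, hv0S, hall v0 hv0l⟩
      exact ⟨v, hvl, hvF⟩
    · push_neg at hR
      have hall : ∀ w ∈ l, w ∈ (reachSet A x ∪ {x})ᶜ := by
        intro w hwl
        intro hmem
        rcases hmem with hw | hw
        · exact hR w hwl hw
        · exact hxnl (hw ▸ hwl)
      obtain ⟨v, hvl, hvF, -⟩ :=
        h2 l (dicycle_restrict hl hall) ⟨v0, hv0l, hv0S, hall v0 hv0l⟩
      exact ⟨v, hvl, hvF⟩
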